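/- arXiv:1304.5288 — 2 statements merged into one kernel-verified Lean document; each statement's English description precedes it below -/
import Mathlib

section
/- Let C be a nodal curve with components C_1,…,C_p and marked smooth point σ(0). Fix (i,j,k) with i ≠ j and C_i ∩ C_j ≠ ∅. If the symmetric difference T^s_{i,k|j,k} is nonempty for some s ∈ {2,3}, then T¹_{i,k|j,k} := (T¹_i ∪ T¹_k) Δ (T¹_j ∪ T¹_k) restricted to the relevant 1-tail data, namely the symmetric difference of the degree-1 nested sets appearing in T_{i,k} and T_{j,k}, is empty. -/
open Finset

/-- A combinatorial model of a nodal curve: `V` is the set of irreducible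
components, `N` the set of nodes, `ends e` the (one or two) components through
the node `e`, `gen v` the geometric genus of the component `v`, and `base` the
component containing the marked smooth point `σ(0)`. -/
structure NodalGraph where
  V : Type
  N : Type
  [fV : Fintype V]
  [dV : DecidableEq V]
  [fN : Fintype N]
  [dN : DecidableEq N]
  ends : N → V × V
  gen : V → ℕ
  base : V

attribute [instance] NodalGraph.fV NodalGraph.dV NodalGraph.fN NodalGraph.dN

namespace NodalGraph

variable (G : NodalGraph)

/-- Two components are adjacent if some node lies on both. -/
def Adj (a b : G.V) : Prop := ∃ e, G.ends e = (a, b) ∨ G.ends e = (b, a)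

/-- The set of terminal points of a subcurve `Z`, i.e. the nodes in `Z ∩ Zᶜ`. -/
def Term (Z : Finset G.V) : Finset G.N :=
  univ.filter (fun e =>
    ((G.ends e).1 ∈ Z ∧ (G.ends e).2 ∉ Z) ∨ ((G.ends e).1 ∉ Z ∧ (G.ends e).2 ∈ Z))

/-- `k_Z`, the number of terminal points of `Z`. -/
def k (Z : Finset G.V) : ℕ := (G.Term Z).card

/-- A (nonempty) subcurve is connected. -/
def ConnSub (Z : Finset G.V) : Prop :=
  Z.Nonempty ∧ ∀ u ∈ Z, ∀ v ∈ Z,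
    Relation.ReflTransGen (fun a b => a ∈ Z ∧ b ∈ Z ∧ G.Adj a b) u v

/-- The whole curve is connected. -/
def Connected : Prop := G.ConnSub univ

/-- A tail: a proper subcurve `Z` with both `Z` and `Zᶜ` connected. -/
def IsTail (Z : Finset G.V) : Prop := Z ≠ univ ∧ G.ConnSub Z ∧ G.ConnSub Zᶜ

/-- A `m`-tail: a tail with `k_Z = m`. -/
def IsKTail (Z : Finset G.V) (m : ℕ) : Prop := G.IsTail Z ∧ G.k Z = m

/-- The node `e` lies on the component `v`. -/
def onComp (e : G.N) (v : G.V) : Prop := (G.ends e).1 = v ∨ (G.ends e).2 = v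

/-- The node `e`, as a point of the curve, lies on the subcurve `Z`. -/
def nodeOn (e : G.N) (Z : Finset G.V) : Prop := (G.ends e).1 ∈ Z ∨ (G.ends e).2 ∈ Z

/-- The subcurve `Z` crosses the node `e`: both branches of `e` lie in `Z`. -/
def crosses (Z : Finset G.V) (e : G.N) : Prop := (G.ends e).1 ∈ Z ∧ (G.ends e).2 ∈ Z

/-- `Z ≺ Z'`: strict inclusion with disjoint terminal points. -/
def prec (Z Z' : Finset G.V) : Prop := Z ⊂ Z' ∧ G.Term Z ∩ G.Term Z' = ∅

/-- The pair `(Z, Z')` is free: disjoint terminal points. -/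
def free (Z Z' : Finset G.V) : Prop := G.Term Z ∩ G.Term Z' = ∅

/-- The pair `(Z, Z')` is perfect. -/
def perfect (Z Z' : Finset G.V) : Prop := Z ⊆ Z' ∨ Z' ⊆ Z ∨ Zᶜ ⊆ Z' ∨ Z' ⊆ Zᶜ

/-- `T¹_γ`: the nested set of 1-tails containing `C_γ` and avoiding `σ(0)`. -/
def T1 (γ : G.V) : Set (Finset G.V) := { Z | G.IsKTail Z 1 ∧ γ ∈ Z ∧ G.base ∉ Z }

/-- The defining condition for the 2-tails entering `T²_{γ,γ'}`. -/
def cond2 (γ γ' : G.V) (Z : Finset G.V) : Prop :=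
  G.IsKTail Z 2 ∧ γ ∈ Z ∧ γ' ∈ Z ∧ G.base ∉ Z

/-- `W 0 ≺ W 1 ≺ ⋯ ≺ W (M-1)` is the nested set `T²_{γ,γ'}` of 2-tails:
each `W t` is minimal among the 2-tails `Z ⊇ C_γ ∪ C_γ'` with `σ(0) ∈ Zᶜ`
and `W (t-1) ≺ Z` (starting from `W_{-1} = ∅`), and the chain is maximal. -/
def IsNested2 (γ γ' : G.V) (M : ℕ) (W : ℕ → Finset G.V) : Prop :=
  (∀ t < M, Minimal (fun Z => G.cond2 γ γ' Z ∧ G.prec (if t = 0 then ∅ else W (t - 1)) Z) (W t)) ∧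
  ¬ ∃ Z, G.cond2 γ γ' Z ∧ G.prec (if M = 0 then ∅ else W (M - 1)) Z

/-- The set underlying a finite chain `W 0, …, W (M-1)`. -/
def chainSet (M : ℕ) (W : ℕ → Finset G.V) : Set (Finset G.V) := { Z | ∃ t < M, W t = Z }

/-- The defining condition for the 3-tails entering `T³_{γ,γ'}`:
3-tails that are moreover free with respect to every member of `T²_{γ,γ'}`. -/
def cond3 (γ γ' : G.V) (T2 : Set (Finset G.V)) (Z : Finset G.V) : Prop :=
  G.IsKTail Z 3 ∧ γ ∈ Z ∧ γ' ∈ Z ∧ G.base ∉ Z ∧ ∀ W ∈ T2, G.free Z W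

/-- `W 0 ≺ ⋯ ≺ W (M-1)` is the nested set `T³_{γ,γ'}` of 3-tails (relative to
the set `T2` of nested 2-tails). -/
def IsNested3 (γ γ' : G.V) (T2 : Set (Finset G.V)) (M : ℕ) (W : ℕ → Finset G.V) : Prop :=
  (∀ t < M, Minimal (fun Z => G.cond3 γ γ' T2 Z ∧ G.prec (if t = 0 then ∅ else W (t - 1)) Z) (W t)) ∧
  ¬ ∃ Z, G.cond3 γ γ' T2 Z ∧ G.prec (if M = 0 then ∅ else W (M - 1)) Z

end NodalGraph

namespace NodalGraph

/-- The set of nodes with one branch in `P` and the other in `Q`. -/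
def Ecut (G : NodalGraph) (P Q : Finset G.V) : Finset G.N :=
  Finset.univ.filter (fun e => ((G.ends e).1 ∈ P ∧ (G.ends e).2 ∈ Q) ∨
    ((G.ends e).1 ∈ Q ∧ (G.ends e).2 ∈ P))

variable {G : NodalGraph}

lemma mem_Ecut {P Q : Finset G.V} {e : G.N} :
    e ∈ G.Ecut P Q ↔ ((G.ends e).1 ∈ P ∧ (G.ends e).2 ∈ Q) ∨
      ((G.ends e).1 ∈ Q ∧ (G.ends e).2 ∈ P) := by
  unfold Ecut; simp

lemma mem_Term {Z : Finset G.V} {e : G.N} :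
    e ∈ G.Term Z ↔ ((G.ends e).1 ∈ Z ∧ (G.ends e).2 ∉ Z) ∨
      ((G.ends e).1 ∉ Z ∧ (G.ends e).2 ∈ Z) := by
  unfold Term; simp

lemma Term_empty : G.Term (∅ : Finset G.V) = ∅ := by
  ext e; simp [mem_Term]

lemma k_eq_card {Z : Finset G.V} : G.k Z = (G.Term Z).card := rfl

lemma Term_inter_subset (Z Z' : Finset G.V) :
    G.Term (Z ∩ Z') ⊆ G.Term Z ∪ G.Term Z' := by
  intro e he
  rw [mem_Term] at he
  rw [Finset.mem_union, mem_Term, mem_Term]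
  simp only [Finset.mem_inter] at he
  tauto

lemma Term_union_subset (Z Z' : Finset G.V) :
    G.Term (Z ∪ Z') ⊆ G.Term Z ∪ G.Term Z' := by
  intro e he
  rw [mem_Term] at he
  rw [Finset.mem_union, mem_Term, mem_Term]
  simp only [Finset.mem_union] at he
  tauto

lemma exists_bridge {S W : Finset G.V} {u v : G.V}
    (h : Relation.ReflTransGen (fun a b => a ∈ S ∧ b ∈ S ∧ G.Adj a b) u v)
    (hu : u ∈ W) (hv : v ∉ W) :
    ∃ e, e ∈ G.Term W ∧ (G.ends e).1 ∈ S ∧ (G.ends e).2 ∈ S := by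
  revert hv
  induction h with
  | refl => intro hv; exact absurd hu hv
  | @tail b c h1 h2 ih =>
    intro hv
    by_cases hb : b ∈ W
    · obtain ⟨hbS, hcS, e, he⟩ := h2
      rcases he with he | he
      · exact ⟨e, mem_Term.mpr (Or.inl (by rw [he]; exact ⟨hb, hv⟩)),
          by rw [he]; exact ⟨hbS, hcS⟩⟩
      · exact ⟨e, mem_Term.mpr (Or.inr (by rw [he]; exact ⟨hv, hb⟩)),
          by rw [he]; exact ⟨hcS, hbS⟩⟩
    · exact ih hb

lemma connsub_union {S T : Finset G.V} {p : G.V} (hS : G.ConnSub S) (hT : G.ConnSub T)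
    (hpS : p ∈ S) (hpT : p ∈ T) : G.ConnSub (S ∪ T) := by
  have mono : ∀ (U : Finset G.V), U ⊆ S ∪ T → ∀ {a b : G.V},
      Relation.ReflTransGen (fun a b => a ∈ U ∧ b ∈ U ∧ G.Adj a b) a b →
      Relation.ReflTransGen (fun a b => a ∈ S ∪ T ∧ b ∈ S ∪ T ∧ G.Adj a b) a b := by
    intro U hU a b h
    exact Relation.ReflTransGen.mono (fun x y (hxy : x ∈ U ∧ y ∈ U ∧ G.Adj x y) =>
      (⟨hU hxy.1, hU hxy.2.1, hxy.2.2⟩ : x ∈ S ∪ T ∧ y ∈ S ∪ T ∧ G.Adj x y)) _ _ h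
  refine ⟨⟨p, Finset.mem_union_left _ hpS⟩, ?_⟩
  intro u hu v hv
  have h1 : ∀ w, w ∈ S ∪ T → Relation.ReflTransGen
      (fun a b => a ∈ S ∪ T ∧ b ∈ S ∪ T ∧ G.Adj a b) w p := by
    intro w hw
    rcases Finset.mem_union.mp hw with h | h
    · exact mono S Finset.subset_union_left (hS.2 w h p hpS)
    · exact mono T Finset.subset_union_right (hT.2 w h p hpT)
  have h2 : ∀ w, w ∈ S ∪ T → Relation.ReflTransGen
      (fun a b => a ∈ S ∪ T ∧ b ∈ S ∪ T ∧ G.Adj a b) p w := by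
    intro w hw
    rcases Finset.mem_union.mp hw with h | h
    · exact mono S Finset.subset_union_left (hS.2 p hpS w h)
    · exact mono T Finset.subset_union_right (hT.2 p hpT w h)
  exact (h1 u hu).trans (h2 v hv)

lemma conn_of_unique_bridge {S P : Finset G.V} (hS : G.ConnSub S) (hPS : P ⊆ S)
    {x : G.V} (hx : x ∈ P)
    (hb : ∀ a b e, a ∈ P → b ∈ S → b ∉ P → (G.ends e = (a, b) ∨ G.ends e = (b, a)) → a = x) :
    G.ConnSub P := by
  classical
  refine ⟨⟨x, hx⟩, ?_⟩
  have main : ∀ u v : G.V, Relation.ReflTransGen (fun a b => a ∈ S ∧ b ∈ S ∧ G.Adj a b) u v →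
      Relation.ReflTransGen (fun a b => a ∈ P ∧ b ∈ P ∧ G.Adj a b)
        (if u ∈ P then u else x) (if v ∈ P then v else x) := by
    intro u v h
    induction h with
    | refl => exact Relation.ReflTransGen.refl
    | @tail b c h1 h2 ih =>
      refine ih.trans ?_
      obtain ⟨hbS, hcS, e, he⟩ := h2
      by_cases hbP : b ∈ P <;> by_cases hcP : c ∈ P
      · rw [if_pos hbP, if_pos hcP]
        exact Relation.ReflTransGen.single ⟨hbP, hcP, e, he⟩
      · have hbx : b = x := hb b c e hbP hcS hcP he
        rw [if_pos hbP, if_neg hcP, hbx]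
      · have hcx : c = x := hb c b e hcP hbS hbP he.symm
        rw [if_neg hbP, if_pos hcP, hcx]
      · rw [if_neg hbP, if_neg hcP]
  intro u hu v hv
  have h := main u v (hS.2 u (hPS hu) v (hPS hv))
  rw [if_pos hu, if_pos hv] at h
  exact h

lemma conn_of_cut_card_one {S P : Finset G.V} (hS : G.ConnSub S) (hPS : P ⊆ S)
    (hne : P.Nonempty) (hcard : (G.Ecut P (S \ P)).card = 1) : G.ConnSub P := by
  classical
  obtain ⟨f, hf⟩ := Finset.card_eq_one.mp hcard
  have hfmem : f ∈ G.Ecut P (S \ P) := by rw [hf]; exact Finset.mem_singleton_self f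
  rw [mem_Ecut] at hfmem
  have hx : (if (G.ends f).1 ∈ P then (G.ends f).1 else (G.ends f).2) ∈ P := by
    split_ifs with h1
    · exact h1
    · rcases hfmem with ⟨h, _⟩ | ⟨_, h⟩
      · exact absurd h h1
      · exact h
  refine conn_of_unique_bridge hS hPS hx ?_
  intro a b e ha hbS hbP he
  have heE : e ∈ G.Ecut P (S \ P) := by
    rw [mem_Ecut]
    rcases he with he | he
    · exact Or.inl (by rw [he]; exact ⟨ha, Finset.mem_sdiff.mpr ⟨hbS, hbP⟩⟩)
    · exact Or.inr (by rw [he]; exact ⟨Finset.mem_sdiff.mpr ⟨hbS, hbP⟩, ha⟩)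
  have hef : e = f := by rw [hf] at heE; exact Finset.mem_singleton.mp heE
  subst hef
  rcases he with he | he
  · have h1 : (G.ends e).1 ∈ P := by rw [he]; exact ha
    rw [if_pos h1, he]
  · have h1 : (G.ends e).1 ∉ P := by rw [he]; exact hbP
    rw [if_neg h1, he]

end NodalGraph
namespace NodalGraph

variable {G : NodalGraph}

lemma Ecut_comm {P Q : Finset G.V} : G.Ecut P Q = G.Ecut Q P := by
  ext e; rw [mem_Ecut, mem_Ecut]; tauto

set_option maxHeartbeats 1600000 in
lemma uncross {Z Z' : Finset G.V} {s : ℕ} {γ γ' : G.V}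
    (hs : s = 2 ∨ s = 3)
    (hZ : G.IsTail Z) (hZ' : G.IsTail Z')
    (hkZ : G.k Z = s) (hkZ' : G.k Z' = s)
    (hγZ : γ ∈ Z) (hγZ' : γ ∈ Z') (hγ'Z : γ' ∈ Z) (hγ'Z' : γ' ∈ Z')
    (hbZ : G.base ∉ Z) (hbZ' : G.base ∉ Z')
    (h1 : ¬ Z ⊆ Z') (h2 : ¬ Z' ⊆ Z) :
    (G.IsTail (Z ∩ Z') ∧ G.k (Z ∩ Z') = s) ∨
    (s = 3 ∧ ∃ T, G.IsTail T ∧ G.k T = 2 ∧ γ ∈ T ∧ γ' ∈ T ∧ G.base ∉ T ∧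
        G.Term T ⊆ G.Term Z ∪ G.Term Z') := by
  classical
  obtain ⟨w2, hw2Z, hw2Z'⟩ := Finset.not_subset.mp h1
  obtain ⟨w3, hw3Z', hw3Z⟩ := Finset.not_subset.mp h2
  -- disjointness helper
  have hdis : ∀ (P Q P' Q' : Finset G.V),
      (∀ x y : G.V, ((x ∈ P ∧ y ∈ Q) ∨ (x ∈ Q ∧ y ∈ P)) →
        ((x ∈ P' ∧ y ∈ Q') ∨ (x ∈ Q' ∧ y ∈ P')) → False) →
      Disjoint (G.Ecut P Q) (G.Ecut P' Q') := by
    intro P Q P' Q' h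
    rw [Finset.disjoint_left]
    intro e he he'
    rw [mem_Ecut] at he he'
    exact h _ _ he he'
  -- the six cut cardinalities
  -- c12 = Ecut (Z∩Z') (Z\Z'), c13 = Ecut (Z∩Z') (Z'\Z), c14 = Ecut (Z∩Z') (Z∪Z')ᶜ
  -- c23 = Ecut (Z\Z') (Z'\Z), c24 = Ecut (Z\Z') (Z∪Z')ᶜ, c34 = Ecut (Z'\Z) (Z∪Z')ᶜ
  have hc12 : 1 ≤ (G.Ecut (Z ∩ Z') (Z \ Z')).card := by
    refine Finset.card_pos.mpr ?_
    obtain ⟨e, he, heS1, heS2⟩ := exists_bridge (hZ.2.1.2 γ hγZ w2 hw2Z) hγZ' hw2Z'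
    refine ⟨e, ?_⟩
    rw [mem_Ecut]
    rw [mem_Term] at he
    rcases he with ⟨ha, hb⟩ | ⟨ha, hb⟩
    · exact Or.inl ⟨Finset.mem_inter.mpr ⟨heS1, ha⟩, Finset.mem_sdiff.mpr ⟨heS2, hb⟩⟩
    · exact Or.inr ⟨Finset.mem_sdiff.mpr ⟨heS1, ha⟩, Finset.mem_inter.mpr ⟨heS2, hb⟩⟩
  have hc13 : 1 ≤ (G.Ecut (Z ∩ Z') (Z' \ Z)).card := by
    refine Finset.card_pos.mpr ?_
    obtain ⟨e, he, heS1, heS2⟩ := exists_bridge (hZ'.2.1.2 γ hγZ' w3 hw3Z') hγZ hw3Z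
    refine ⟨e, ?_⟩
    rw [mem_Ecut]
    rw [mem_Term] at he
    rcases he with ⟨ha, hb⟩ | ⟨ha, hb⟩
    · exact Or.inl ⟨Finset.mem_inter.mpr ⟨ha, heS1⟩, Finset.mem_sdiff.mpr ⟨heS2, hb⟩⟩
    · exact Or.inr ⟨Finset.mem_sdiff.mpr ⟨heS1, ha⟩, Finset.mem_inter.mpr ⟨hb, heS2⟩⟩
  have hc24 : 1 ≤ (G.Ecut (Z \ Z') ((Z ∪ Z')ᶜ)).card := by
    refine Finset.card_pos.mpr ?_
    obtain ⟨e, he, heS1, heS2⟩ := exists_bridge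
      (hZ'.2.2.2 w2 (Finset.mem_compl.mpr hw2Z') G.base (Finset.mem_compl.mpr hbZ'))
      hw2Z hbZ
    refine ⟨e, ?_⟩
    rw [mem_Ecut]
    rw [mem_Term] at he
    rw [Finset.mem_compl] at heS1 heS2
    rcases he with ⟨ha, hb⟩ | ⟨ha, hb⟩
    · exact Or.inl ⟨Finset.mem_sdiff.mpr ⟨ha, heS1⟩,
        Finset.mem_compl.mpr (by rw [Finset.mem_union]; tauto)⟩
    · exact Or.inr ⟨Finset.mem_compl.mpr (by rw [Finset.mem_union]; tauto),
        Finset.mem_sdiff.mpr ⟨hb, heS2⟩⟩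
  have hc34 : 1 ≤ (G.Ecut (Z' \ Z) ((Z ∪ Z')ᶜ)).card := by
    refine Finset.card_pos.mpr ?_
    obtain ⟨e, he, heS1, heS2⟩ := exists_bridge
      (hZ.2.2.2 w3 (Finset.mem_compl.mpr hw3Z) G.base (Finset.mem_compl.mpr hbZ))
      hw3Z' hbZ'
    refine ⟨e, ?_⟩
    rw [mem_Ecut]
    rw [mem_Term] at he
    rw [Finset.mem_compl] at heS1 heS2
    rcases he with ⟨ha, hb⟩ | ⟨ha, hb⟩
    · exact Or.inl ⟨Finset.mem_sdiff.mpr ⟨ha, heS1⟩,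
        Finset.mem_compl.mpr (by rw [Finset.mem_union]; tauto)⟩
    · exact Or.inr ⟨Finset.mem_compl.mpr (by rw [Finset.mem_union]; tauto),
        Finset.mem_sdiff.mpr ⟨hb, heS2⟩⟩
  -- partition identities
  have hTZ : G.Term Z = (G.Ecut (Z ∩ Z') (Z' \ Z) ∪ G.Ecut (Z ∩ Z') ((Z ∪ Z')ᶜ)) ∪
      (G.Ecut (Z \ Z') (Z' \ Z) ∪ G.Ecut (Z \ Z') ((Z ∪ Z')ᶜ)) := by
    ext e
    by_cases a1 : (G.ends e).1 ∈ Z <;> by_cases a2 : (G.ends e).1 ∈ Z' <;>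
      by_cases b1 : (G.ends e).2 ∈ Z <;> by_cases b2 : (G.ends e).2 ∈ Z' <;>
      simp [mem_Term, mem_Ecut, a1, a2, b1, b2]
  have hTZ' : G.Term Z' = (G.Ecut (Z ∩ Z') (Z \ Z') ∪ G.Ecut (Z ∩ Z') ((Z ∪ Z')ᶜ)) ∪
      (G.Ecut (Z \ Z') (Z' \ Z) ∪ G.Ecut (Z' \ Z) ((Z ∪ Z')ᶜ)) := by
    ext e
    by_cases a1 : (G.ends e).1 ∈ Z <;> by_cases a2 : (G.ends e).1 ∈ Z' <;>
      by_cases b1 : (G.ends e).2 ∈ Z <;> by_cases b2 : (G.ends e).2 ∈ Z' <;>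
      simp [mem_Term, mem_Ecut, a1, a2, b1, b2]
  have hTA : G.Term (Z ∩ Z') = (G.Ecut (Z ∩ Z') (Z \ Z') ∪ G.Ecut (Z ∩ Z') (Z' \ Z)) ∪
      G.Ecut (Z ∩ Z') ((Z ∪ Z')ᶜ) := by
    ext e
    by_cases a1 : (G.ends e).1 ∈ Z <;> by_cases a2 : (G.ends e).1 ∈ Z' <;>
      by_cases b1 : (G.ends e).2 ∈ Z <;> by_cases b2 : (G.ends e).2 ∈ Z' <;>
      simp [mem_Term, mem_Ecut, a1, a2, b1, b2]
  have hTB : G.Term (Z ∪ Z') = (G.Ecut (Z ∩ Z') ((Z ∪ Z')ᶜ) ∪ G.Ecut (Z \ Z') ((Z ∪ Z')ᶜ)) ∪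
      G.Ecut (Z' \ Z) ((Z ∪ Z')ᶜ) := by
    ext e
    by_cases a1 : (G.ends e).1 ∈ Z <;> by_cases a2 : (G.ends e).1 ∈ Z' <;>
      by_cases b1 : (G.ends e).2 ∈ Z <;> by_cases b2 : (G.ends e).2 ∈ Z' <;>
      simp [mem_Term, mem_Ecut, a1, a2, b1, b2]
  have hkZeq : (G.Ecut (Z ∩ Z') (Z' \ Z)).card + (G.Ecut (Z ∩ Z') ((Z ∪ Z')ᶜ)).card +
      ((G.Ecut (Z \ Z') (Z' \ Z)).card + (G.Ecut (Z \ Z') ((Z ∪ Z')ᶜ)).card) = s := by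
    have h := hkZ
    rw [k_eq_card, hTZ] at h
    rw [Finset.card_union_of_disjoint, Finset.card_union_of_disjoint,
      Finset.card_union_of_disjoint] at h
    · exact h
    · refine hdis _ _ _ _ ?_
      intro x y hxy hxy'
      simp only [Finset.mem_inter, Finset.mem_sdiff, Finset.mem_compl, Finset.mem_union] at hxy hxy'
      tauto
    · refine hdis _ _ _ _ ?_
      intro x y hxy hxy'
      simp only [Finset.mem_inter, Finset.mem_sdiff, Finset.mem_compl, Finset.mem_union] at hxy hxy'
      tauto
    · rw [Finset.disjoint_union_left, Finset.disjoint_union_right, Finset.disjoint_union_right]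
      refine ⟨⟨?_, ?_⟩, ?_, ?_⟩ <;>
      · refine hdis _ _ _ _ ?_
        intro x y hxy hxy'
        simp only [Finset.mem_inter, Finset.mem_sdiff, Finset.mem_compl, Finset.mem_union] at hxy hxy'
        tauto
  have hkZ'eq : (G.Ecut (Z ∩ Z') (Z \ Z')).card + (G.Ecut (Z ∩ Z') ((Z ∪ Z')ᶜ)).card +
      ((G.Ecut (Z \ Z') (Z' \ Z)).card + (G.Ecut (Z' \ Z) ((Z ∪ Z')ᶜ)).card) = s := by
    have h := hkZ'
    rw [k_eq_card, hTZ'] at h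
    rw [Finset.card_union_of_disjoint, Finset.card_union_of_disjoint,
      Finset.card_union_of_disjoint] at h
    · exact h
    · refine hdis _ _ _ _ ?_
      intro x y hxy hxy'
      simp only [Finset.mem_inter, Finset.mem_sdiff, Finset.mem_compl, Finset.mem_union] at hxy hxy'
      tauto
    · refine hdis _ _ _ _ ?_
      intro x y hxy hxy'
      simp only [Finset.mem_inter, Finset.mem_sdiff, Finset.mem_compl, Finset.mem_union] at hxy hxy'
      tauto
    · rw [Finset.disjoint_union_left, Finset.disjoint_union_right, Finset.disjoint_union_right]
      refine ⟨⟨?_, ?_⟩, ?_, ?_⟩ <;>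
      · refine hdis _ _ _ _ ?_
        intro x y hxy hxy'
        simp only [Finset.mem_inter, Finset.mem_sdiff, Finset.mem_compl, Finset.mem_union] at hxy hxy'
        tauto
  have hkAeq : G.k (Z ∩ Z') = (G.Ecut (Z ∩ Z') (Z \ Z')).card +
      (G.Ecut (Z ∩ Z') (Z' \ Z)).card + (G.Ecut (Z ∩ Z') ((Z ∪ Z')ᶜ)).card := by
    rw [k_eq_card, hTA]
    rw [Finset.card_union_of_disjoint, Finset.card_union_of_disjoint]
    · refine hdis _ _ _ _ ?_
      intro x y hxy hxy'
      simp only [Finset.mem_inter, Finset.mem_sdiff, Finset.mem_compl, Finset.mem_union] at hxy hxy'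
      tauto
    · rw [Finset.disjoint_union_left]
      constructor <;>
      · refine hdis _ _ _ _ ?_
        intro x y hxy hxy'
        simp only [Finset.mem_inter, Finset.mem_sdiff, Finset.mem_compl, Finset.mem_union] at hxy hxy'
        tauto
  have hkBeq : G.k (Z ∪ Z') = (G.Ecut (Z ∩ Z') ((Z ∪ Z')ᶜ)).card +
      (G.Ecut (Z \ Z') ((Z ∪ Z')ᶜ)).card + (G.Ecut (Z' \ Z) ((Z ∪ Z')ᶜ)).card := by
    rw [k_eq_card, hTB]
    rw [Finset.card_union_of_disjoint, Finset.card_union_of_disjoint]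
    · refine hdis _ _ _ _ ?_
      intro x y hxy hxy'
      simp only [Finset.mem_inter, Finset.mem_sdiff, Finset.mem_compl, Finset.mem_union] at hxy hxy'
      tauto
    · rw [Finset.disjoint_union_left]
      constructor <;>
      · refine hdis _ _ _ _ ?_
        intro x y hxy hxy'
        simp only [Finset.mem_inter, Finset.mem_sdiff, Finset.mem_compl, Finset.mem_union] at hxy hxy'
        tauto
  -- basic tail facts
  have hAneuniv : Z ∩ Z' ≠ Finset.univ := by
    intro h
    have := Finset.mem_univ (G.base)
    rw [← h, Finset.mem_inter] at this
    exact hbZ this.1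
  have hAcconn : G.ConnSub ((Z ∩ Z')ᶜ) := by
    rw [Finset.compl_inter]
    exact connsub_union hZ.2.2 hZ'.2.2 (Finset.mem_compl.mpr hbZ) (Finset.mem_compl.mpr hbZ')
  have hAconn12 : (G.Ecut (Z ∩ Z') (Z \ Z')).card = 1 → G.ConnSub (Z ∩ Z') := by
    intro hcard
    refine conn_of_cut_card_one hZ.2.1 Finset.inter_subset_left
      ⟨γ, Finset.mem_inter.mpr ⟨hγZ, hγZ'⟩⟩ ?_
    have hsd : Z \ (Z ∩ Z') = Z \ Z' := by
      ext x; simp only [Finset.mem_sdiff, Finset.mem_inter]; tauto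
    rw [hsd]
    exact hcard
  have hAconn13 : (G.Ecut (Z ∩ Z') (Z' \ Z)).card = 1 → G.ConnSub (Z ∩ Z') := by
    intro hcard
    refine conn_of_cut_card_one hZ'.2.1 Finset.inter_subset_right
      ⟨γ, Finset.mem_inter.mpr ⟨hγZ, hγZ'⟩⟩ ?_
    have hsd : Z' \ (Z ∩ Z') = Z' \ Z := by
      ext x; simp only [Finset.mem_sdiff, Finset.mem_inter]; tauto
    rw [hsd]
    exact hcard
  -- the case analysis
  have hcase : ((G.Ecut (Z ∩ Z') (Z \ Z')).card = 1 ∨ (G.Ecut (Z ∩ Z') (Z' \ Z)).card = 1) ∧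
        (G.Ecut (Z ∩ Z') (Z \ Z')).card + (G.Ecut (Z ∩ Z') (Z' \ Z)).card +
          (G.Ecut (Z ∩ Z') ((Z ∪ Z')ᶜ)).card = s ∨
      ((G.Ecut (Z ∩ Z') (Z \ Z')).card = 1 ∧ (G.Ecut (Z ∩ Z') (Z' \ Z)).card = 1 ∧
        (G.Ecut (Z ∩ Z') ((Z ∪ Z')ᶜ)).card = 0 ∧ s = 3) ∨
      ((G.Ecut (Z ∩ Z') ((Z ∪ Z')ᶜ)).card + (G.Ecut (Z \ Z') ((Z ∪ Z')ᶜ)).card +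
          (G.Ecut (Z' \ Z) ((Z ∪ Z')ᶜ)).card = 2 ∧
        (G.Ecut (Z' \ Z) ((Z ∪ Z')ᶜ)).card = 1 ∧ s = 3) := by
    rcases hs with rfl | rfl <;> omega
  rcases hcase with ⟨hmin1, hsum⟩ | ⟨h12, h13, _, hs3⟩ | ⟨hsum, h34, hs3⟩
  · left
    have hAconn : G.ConnSub (Z ∩ Z') := by
      rcases hmin1 with h | h
      · exact hAconn12 h
      · exact hAconn13 h
    exact ⟨⟨hAneuniv, hAconn, hAcconn⟩, by omega⟩
  · right
    refine ⟨hs3, Z ∩ Z', ⟨hAneuniv, hAconn12 h12, hAcconn⟩, by omega,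
      Finset.mem_inter.mpr ⟨hγZ, hγZ'⟩, Finset.mem_inter.mpr ⟨hγ'Z, hγ'Z'⟩,
      fun h => hbZ (Finset.mem_inter.mp h).1, Term_inter_subset Z Z'⟩
  · right
    have hBneuniv : Z ∪ Z' ≠ Finset.univ := by
      intro h
      have := Finset.mem_univ (G.base)
      rw [← h, Finset.mem_union] at this
      tauto
    have hBconn : G.ConnSub (Z ∪ Z') := connsub_union hZ.2.1 hZ'.2.1 hγZ hγZ'
    have hBcconn : G.ConnSub ((Z ∪ Z')ᶜ) := by
      refine conn_of_cut_card_one hZ.2.2 ?_ ⟨G.base, Finset.mem_compl.mpr (by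
        rw [Finset.mem_union]; tauto)⟩ ?_
      · intro x hx
        rw [Finset.mem_compl] at hx ⊢
        intro hxZ
        exact hx (Finset.mem_union_left _ hxZ)
      · have hsd : Zᶜ \ (Z ∪ Z')ᶜ = Z' \ Z := by
          ext x
          simp only [Finset.mem_sdiff, Finset.mem_compl, Finset.mem_union]
          tauto
        rw [hsd, Ecut_comm]
        exact h34
    refine ⟨hs3, Z ∪ Z', ⟨hBneuniv, hBconn, hBcconn⟩, by omega,
      Finset.mem_union_left _ hγZ, Finset.mem_union_left _ hγ'Z,
      by rw [Finset.mem_union]; tauto, Term_union_subset Z Z'⟩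

end NodalGraph
namespace NodalGraph

variable {G : NodalGraph}

lemma inter_term_empty {A B C : Finset G.N} (hAB : A ∩ B = ∅) (hAC : A ∩ C = ∅)
    (hsub : D ⊆ B ∪ C) : A ∩ D = ∅ := by
  rw [Finset.eq_empty_iff_forall_notMem]
  intro x hx
  rw [Finset.mem_inter] at hx
  rcases Finset.mem_union.mp (hsub hx.2) with h | h
  · exact (Finset.eq_empty_iff_forall_notMem.mp hAB) x (Finset.mem_inter.mpr ⟨hx.1, h⟩)
  · exact (Finset.eq_empty_iff_forall_notMem.mp hAC) x (Finset.mem_inter.mpr ⟨hx.1, h⟩)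

lemma minimal_unique {cond : Finset G.V → Prop} {Y Z Z' : Finset G.V} {s : ℕ} {γ γ' : G.V}
    (hs : s = 2 ∨ s = 3)
    (hcond : ∀ T, cond T → G.IsTail T ∧ G.k T = s ∧ γ ∈ T ∧ γ' ∈ T ∧ G.base ∉ T)
    (hcondA : G.IsTail (Z ∩ Z') → G.k (Z ∩ Z') = s → cond (Z ∩ Z'))
    (hB : ∀ T, G.IsTail T → G.k T = 2 → γ ∈ T → γ' ∈ T → G.base ∉ T →
        G.Term T ⊆ G.Term Z ∪ G.Term Z' → s = 3 → False)
    (hmin : Minimal (fun T => cond T ∧ G.prec Y T) Z)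
    (hmin' : Minimal (fun T => cond T ∧ G.prec Y T) Z') : Z = Z' := by
  by_cases hss : Z ⊆ Z'
  · exact Finset.Subset.antisymm hss (hmin'.2 hmin.1 hss)
  by_cases hss' : Z' ⊆ Z
  · exact (Finset.Subset.antisymm hss' (hmin.2 hmin'.1 hss')).symm
  obtain ⟨hcZ, hpZ⟩ := hmin.1
  obtain ⟨hcZ', hpZ'⟩ := hmin'.1
  obtain ⟨htZ, hkZ, hγZ, hγ'Z, hbZ⟩ := hcond Z hcZ
  obtain ⟨htZ', hkZ', hγZ', hγ'Z', hbZ'⟩ := hcond Z' hcZ'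
  rcases uncross hs htZ htZ' hkZ hkZ' hγZ hγZ' hγ'Z hγ'Z' hbZ hbZ' hss hss' with
    ⟨htA, hkA⟩ | ⟨hs3, T, htT, hkT, hγT, hγ'T, hbT, hsubT⟩
  · have hYA : Y ⊆ Z ∩ Z' := Finset.subset_inter hpZ.1.subset hpZ'.1.subset
    have hTdisj : G.Term Y ∩ G.Term (Z ∩ Z') = ∅ :=
      inter_term_empty hpZ.2 hpZ'.2 (Term_inter_subset Z Z')
    have hYne : Y ≠ Z ∩ Z' := by
      intro h
      rw [h, Finset.inter_self] at hTdisj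
      have : G.k (Z ∩ Z') = 0 := by rw [k_eq_card, hTdisj]; rfl
      omega
    have hle : Z ⊆ Z ∩ Z' :=
      hmin.2 ⟨hcondA htA hkA, ⟨Finset.ssubset_iff_subset_ne.mpr ⟨hYA, hYne⟩, hTdisj⟩⟩
        Finset.inter_subset_left
    exact absurd (hle.trans Finset.inter_subset_right) hss
  · exact (hB T htT hkT hγT hγ'T hbT hsubT hs3).elim

lemma no_free_cond2 {γ γ' : G.V} {M : ℕ} {W : ℕ → Finset G.V}
    (hch : G.IsNested2 γ γ' M W) {T : Finset G.V}
    (htT : G.IsTail T) (hkT : G.k T = 2) (hγT : γ ∈ T) (hγ'T : γ' ∈ T) (hbT : G.base ∉ T)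
    (hfree : ∀ t, t < M → G.Term T ∩ G.Term (W t) = ∅) : False := by
  classical
  have hTne : (G.Term T).Nonempty := by
    refine Finset.card_pos.mp ?_
    rw [← k_eq_card, hkT]; omega
  have neqT : ∀ t, t < M → T ≠ W t := by
    intro t ht h
    have := hfree t ht
    rw [← h, Finset.inter_self] at this
    rw [this] at hTne
    exact Finset.not_nonempty_empty hTne
  have cond2T : G.cond2 γ γ' T := ⟨⟨htT, hkT⟩, hγT, hγ'T, hbT⟩
  have subclaim : ∀ t, t < M → (∀ u, u < t → W u ⊆ T) → W t ⊆ T ∨ T ⊆ W t := by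
    intro t ht hprev
    by_cases hc1 : W t ⊆ T
    · exact Or.inl hc1
    by_cases hc2 : T ⊆ W t
    · exact Or.inr hc2
    have hmin := hch.1 t ht
    obtain ⟨⟨⟨htV, hkV⟩, hγV, hγ'V, hbV⟩, hpV⟩ := hmin.1
    rcases uncross (Or.inl rfl) htV htT hkV hkT hγV hγT hγ'V hγ'T hbV hbT hc1 hc2 with
      ⟨htA, hkA⟩ | ⟨hs3, _⟩
    · exfalso
      have hprevT : (if t = 0 then (∅ : Finset G.V) else W (t-1)) ⊆ T := by
        split_ifs with h0
        · exact Finset.empty_subset T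
        · exact hprev (t-1) (by omega)
      have hprevFree : G.Term (if t = 0 then (∅ : Finset G.V) else W (t-1)) ∩ G.Term T = ∅ := by
        split_ifs with h0
        · rw [Term_empty, Finset.empty_inter]
        · rw [Finset.inter_comm]
          exact hfree (t-1) (by omega)
      have hYA : (if t = 0 then (∅ : Finset G.V) else W (t-1)) ⊆ W t ∩ T :=
        Finset.subset_inter hpV.1.subset hprevT
      have hTdisj : G.Term (if t = 0 then (∅ : Finset G.V) else W (t-1)) ∩
          G.Term (W t ∩ T) = ∅ :=
        inter_term_empty hpV.2 hprevFree (Term_inter_subset (W t) T)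
      have hYne : (if t = 0 then (∅ : Finset G.V) else W (t-1)) ≠ W t ∩ T := by
        intro h
        rw [h, Finset.inter_self] at hTdisj
        have : G.k (W t ∩ T) = 0 := by rw [k_eq_card, hTdisj]; rfl
        omega
      have hle : W t ⊆ W t ∩ T :=
        hmin.2 ⟨⟨⟨htA, hkA⟩, Finset.mem_inter.mpr ⟨hγV, hγT⟩, Finset.mem_inter.mpr ⟨hγ'V, hγ'T⟩,
          fun h => hbV (Finset.mem_inter.mp h).1⟩,
          ⟨Finset.ssubset_iff_subset_ne.mpr ⟨hYA, hYne⟩, hTdisj⟩⟩ Finset.inter_subset_left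
      exact hc1 (hle.trans Finset.inter_subset_right)
    · omega
  by_cases hall : ∀ t, t < M → W t ⊆ T
  · apply hch.2
    refine ⟨T, cond2T, ?_⟩
    rcases Nat.eq_zero_or_pos M with h0 | hpos
    · rw [if_pos h0]
      refine ⟨Finset.empty_ssubset.mpr htT.2.1.1, ?_⟩
      rw [Term_empty, Finset.empty_inter]
    · rw [if_neg (by omega)]
      refine ⟨Finset.ssubset_iff_subset_ne.mpr ⟨hall (M-1) (by omega),
        fun h => neqT (M-1) (by omega) h.symm⟩, ?_⟩
      rw [Finset.inter_comm]
      exact hfree (M-1) (by omega)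
  · push_neg at hall
    have hex : ∃ t, t < M ∧ ¬ W t ⊆ T := hall
    set t₀ := Nat.find hex with ht₀def
    obtain ⟨ht₀M, ht₀n⟩ := Nat.find_spec hex
    have hprev : ∀ u, u < t₀ → W u ⊆ T := by
      intro u hu
      by_contra hc
      exact Nat.find_min hex hu ⟨by omega, hc⟩
    rcases subclaim t₀ ht₀M hprev with h | hTle
    · exact ht₀n h
    have hmin := hch.1 t₀ ht₀M
    apply ht₀n
    refine (hmin.2 ⟨cond2T, ?_⟩ hTle)
    rcases Nat.eq_zero_or_pos t₀ with h0 | hpos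
    · rw [if_pos h0]
      refine ⟨Finset.empty_ssubset.mpr htT.2.1.1, ?_⟩
      rw [Term_empty, Finset.empty_inter]
    · rw [if_neg (by omega)]
      refine ⟨Finset.ssubset_iff_subset_ne.mpr ⟨hprev (t₀-1) (by omega),
        fun h => neqT (t₀-1) (by omega) h.symm⟩, ?_⟩
      rw [Finset.inter_comm]
      exact hfree (t₀-1) (by omega)

lemma nested_eq {C : Finset G.V → Prop} {M M' : ℕ} {W W' : ℕ → Finset G.V}
    (h : (∀ t < M, Minimal (fun Z => C Z ∧ G.prec (if t = 0 then ∅ else W (t-1)) Z) (W t)) ∧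
         ¬ ∃ Z, C Z ∧ G.prec (if M = 0 then ∅ else W (M-1)) Z)
    (h' : (∀ t < M', Minimal (fun Z => C Z ∧ G.prec (if t = 0 then ∅ else W' (t-1)) Z) (W' t)) ∧
         ¬ ∃ Z, C Z ∧ G.prec (if M' = 0 then ∅ else W' (M'-1)) Z)
    (huniq : ∀ (Y Z Z' : Finset G.V), Minimal (fun T => C T ∧ G.prec Y T) Z →
        Minimal (fun T => C T ∧ G.prec Y T) Z' → Z = Z') :
    G.chainSet M W = G.chainSet M' W' := by
  have key : ∀ t, t < M → t < M' → W t = W' t := by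
    intro t
    induction t using Nat.strong_induction_on with
    | _ t ih =>
      intro htM htM'
      have hpe : (if t = 0 then (∅ : Finset G.V) else W (t-1)) =
          (if t = 0 then ∅ else W' (t-1)) := by
        split_ifs with h0
        · rfl
        · exact ih (t-1) (by omega) (by omega) (by omega)
      have hm' := h'.1 t htM'
      rw [← hpe] at hm'
      exact huniq _ _ _ (h.1 t htM) hm'
  have hMM' : M = M' := by
    by_contra hne
    rcases Nat.lt_or_ge M M' with hlt | hge
    · apply h.2
      have hmin := h'.1 M hlt
      refine ⟨W' M, hmin.1.1, ?_⟩
      have hpe : (if M = 0 then (∅ : Finset G.V) else W' (M-1)) =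
          (if M = 0 then ∅ else W (M-1)) := by
        split_ifs with h0
        · rfl
        · exact (key (M-1) (by omega) (by omega)).symm
      rw [← hpe]
      exact hmin.1.2
    · have hlt : M' < M := by omega
      apply h'.2
      have hmin := h.1 M' hlt
      refine ⟨W M', hmin.1.1, ?_⟩
      have hpe : (if M' = 0 then (∅ : Finset G.V) else W (M'-1)) =
          (if M' = 0 then ∅ else W' (M'-1)) := by
        split_ifs with h0
        · rfl
        · exact key (M'-1) (by omega) (by omega)
      rw [← hpe]
      exact hmin.1.2
  subst hMM'
  unfold chainSet
  ext X
  constructor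
  · rintro ⟨t, ht, rfl⟩
    exact ⟨t, ht, (key t ht ht).symm⟩
  · rintro ⟨t, ht, rfl⟩
    exact ⟨t, ht, key t ht ht⟩

lemma mem_trans_of_tails {Z₀ : Finset G.V} {a b : G.V} {e₀ : G.N}
    (hT : G.Term Z₀ = {e₀}) (he₀ : G.ends e₀ = (a, b) ∨ G.ends e₀ = (b, a))
    {S : Finset G.V} (hS : G.ConnSub S) {u v : G.V} (hu : u ∈ S) (hv : v ∈ S)
    (huZ : u ∈ Z₀) (hvZ : v ∉ Z₀) : a ∈ S ∧ b ∈ S := by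
  obtain ⟨e, heT, h1, h2⟩ := exists_bridge (hS.2 u hu v hv) huZ hvZ
  rw [hT, Finset.mem_singleton] at heT
  subst heT
  rcases he₀ with he | he <;> rw [he] at h1 h2
  · exact ⟨h1, h2⟩
  · exact ⟨h2, h1⟩

end NodalGraph
namespace NodalGraph

variable {G : NodalGraph}

lemma main_aux (a b c : G.V)
    (e₀ : G.N) (he₀ : G.ends e₀ = (a, b) ∨ G.ends e₀ = (b, a))
    (Z₀ : Finset G.V) (hZ₀ : G.IsKTail Z₀ 1)
    (haZ : a ∈ Z₀) (hbZ : b ∉ Z₀) (hcZ : c ∉ Z₀) (hbase : G.base ∉ Z₀)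
    {M2a M2b M3a M3b : ℕ} {W2a W2b W3a W3b : ℕ → Finset G.V}
    (h2a : G.IsNested2 a c M2a W2a) (h2b : G.IsNested2 b c M2b W2b)
    (h3a : G.IsNested3 a c (G.chainSet M2a W2a) M3a W3a)
    (h3b : G.IsNested3 b c (G.chainSet M2b W2b) M3b W3b) :
    G.chainSet M2a W2a = G.chainSet M2b W2b ∧ G.chainSet M3a W3a = G.chainSet M3b W3b := by
  classical
  -- Term Z₀ = {e₀}
  have hTZ₀ : G.Term Z₀ = {e₀} := by
    have he₀T : e₀ ∈ G.Term Z₀ := by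
      rw [mem_Term]
      rcases he₀ with he | he <;> rw [he]
      · exact Or.inl ⟨haZ, hbZ⟩
      · exact Or.inr ⟨hbZ, haZ⟩
    obtain ⟨x, hx⟩ := Finset.card_eq_one.mp hZ₀.2
    rw [hx] at he₀T ⊢
    rw [Finset.mem_singleton] at he₀T
    rw [he₀T]
  -- membership transfer
  have memiff : ∀ T : Finset G.V, G.IsTail T → c ∈ T → G.base ∉ T → (a ∈ T ↔ b ∈ T) := by
    intro T htT hcT hbaseT
    constructor
    · intro haT
      exact (mem_trans_of_tails hTZ₀ he₀ htT.2.1 haT hcT haZ hcZ).2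
    · intro hbT
      by_contra han
      by_cases hint : ∃ x, x ∈ T ∧ x ∈ Z₀
      · obtain ⟨x, hxT, hxZ⟩ := hint
        exact han (mem_trans_of_tails hTZ₀ he₀ htT.2.1 hxT hbT hxZ hbZ).1
      · push_neg at hint
        have hbc : b ∈ Tᶜ :=
          (mem_trans_of_tails hTZ₀ he₀ htT.2.2 (Finset.mem_compl.mpr han)
            (Finset.mem_compl.mpr hbaseT) haZ hbase).2
        rw [Finset.mem_compl] at hbc
        exact hbc hbT
  -- cond2 transfer
  have cond2iff : ∀ T, G.cond2 a c T ↔ G.cond2 b c T := by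
    intro T
    constructor
    · rintro ⟨hk, haT, hcT, hbT⟩
      exact ⟨hk, (memiff T hk.1 hcT hbT).mp haT, hcT, hbT⟩
    · rintro ⟨hk, hbT', hcT, hbT⟩
      exact ⟨hk, (memiff T hk.1 hcT hbT).mpr hbT', hcT, hbT⟩
  have hfun2 : G.cond2 b c = G.cond2 a c := funext fun T => propext (cond2iff T).symm
  -- uniqueness of minimal elements for cond2 a c
  have huniq2 : ∀ (Y Z Z' : Finset G.V),
      Minimal (fun T => G.cond2 a c T ∧ G.prec Y T) Z →
      Minimal (fun T => G.cond2 a c T ∧ G.prec Y T) Z' → Z = Z' := by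
    intro Y Z Z' hm hm'
    refine minimal_unique (s := 2) (γ := a) (γ' := c) (Or.inl rfl) ?_ ?_ ?_ hm hm'
    · rintro T ⟨⟨htT, hkT⟩, haT, hcT, hbT⟩
      exact ⟨htT, hkT, haT, hcT, hbT⟩
    · intro htA hkA
      obtain ⟨⟨_, haZ', hcZ', hbZ'⟩, _⟩ := hm.1
      obtain ⟨⟨_, haZ'', hcZ'', hbZ''⟩, _⟩ := hm'.1
      exact ⟨⟨htA, hkA⟩, Finset.mem_inter.mpr ⟨haZ', haZ''⟩,
        Finset.mem_inter.mpr ⟨hcZ', hcZ''⟩, fun h => hbZ' (Finset.mem_inter.mp h).1⟩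
    · intro T _ _ _ _ _ _ h23
      omega
  have h2b' : (∀ t < M2b, Minimal
        (fun Z => G.cond2 a c Z ∧ G.prec (if t = 0 then ∅ else W2b (t-1)) Z) (W2b t)) ∧
      ¬ ∃ Z, G.cond2 a c Z ∧ G.prec (if M2b = 0 then ∅ else W2b (M2b-1)) Z := by
    have h := h2b
    unfold IsNested2 at h
    rw [hfun2] at h
    exact h
  have ch2 : G.chainSet M2a W2a = G.chainSet M2b W2b :=
    nested_eq ⟨h2a.1, h2a.2⟩ h2b' huniq2
  refine ⟨ch2, ?_⟩
  -- cond3 transfer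
  have cond3iff : ∀ T, G.cond3 a c (G.chainSet M2a W2a) T ↔
      G.cond3 b c (G.chainSet M2b W2b) T := by
    intro T
    rw [← ch2]
    constructor
    · rintro ⟨hk, haT, hcT, hbT, hfr⟩
      exact ⟨hk, (memiff T hk.1 hcT hbT).mp haT, hcT, hbT, hfr⟩
    · rintro ⟨hk, hbT', hcT, hbT, hfr⟩
      exact ⟨hk, (memiff T hk.1 hcT hbT).mpr hbT', hcT, hbT, hfr⟩
  have hfun3 : G.cond3 b c (G.chainSet M2b W2b) = G.cond3 a c (G.chainSet M2a W2a) :=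
    funext fun T => propext (cond3iff T).symm
  have huniq3 : ∀ (Y Z Z' : Finset G.V),
      Minimal (fun T => G.cond3 a c (G.chainSet M2a W2a) T ∧ G.prec Y T) Z →
      Minimal (fun T => G.cond3 a c (G.chainSet M2a W2a) T ∧ G.prec Y T) Z' → Z = Z' := by
    intro Y Z Z' hm hm'
    obtain ⟨⟨⟨htZc, hkZc⟩, haZ', hcZ', hbZ', hfrZ⟩, _⟩ := hm.1
    obtain ⟨⟨⟨htZc', hkZc'⟩, haZ'', hcZ'', hbZ'', hfrZ'⟩, _⟩ := hm'.1
    refine minimal_unique (s := 3) (γ := a) (γ' := c) (Or.inr rfl) ?_ ?_ ?_ hm hm'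
    · rintro T ⟨⟨htT, hkT⟩, haT, hcT, hbT, _⟩
      exact ⟨htT, hkT, haT, hcT, hbT⟩
    · intro htA hkA
      refine ⟨⟨htA, hkA⟩, Finset.mem_inter.mpr ⟨haZ', haZ''⟩,
        Finset.mem_inter.mpr ⟨hcZ', hcZ''⟩, fun h => hbZ' (Finset.mem_inter.mp h).1, ?_⟩
      intro Wm hWm
      have hres : G.Term Wm ∩ G.Term (Z ∩ Z') = ∅ :=
        inter_term_empty (by rw [Finset.inter_comm]; exact hfrZ Wm hWm)
          (by rw [Finset.inter_comm]; exact hfrZ' Wm hWm) (Term_inter_subset Z Z')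
      unfold free
      rw [Finset.inter_comm]
      exact hres
    · intro T htT hkT haT hcT hbT hsubT _
      refine no_free_cond2 h2a htT hkT haT hcT hbT ?_
      intro t ht
      have hWm : W2a t ∈ G.chainSet M2a W2a := ⟨t, ht, rfl⟩
      have hres : G.Term (W2a t) ∩ G.Term T = ∅ :=
        inter_term_empty (by rw [Finset.inter_comm]; exact hfrZ _ hWm)
          (by rw [Finset.inter_comm]; exact hfrZ' _ hWm) hsubT
      rw [Finset.inter_comm]
      exact hres
  have h3b' : (∀ t < M3b, Minimal
        (fun Z => G.cond3 a c (G.chainSet M2a W2a) Z ∧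
          G.prec (if t = 0 then ∅ else W3b (t-1)) Z) (W3b t)) ∧
      ¬ ∃ Z, G.cond3 a c (G.chainSet M2a W2a) Z ∧
        G.prec (if M3b = 0 then ∅ else W3b (M3b-1)) Z := by
    have h := h3b
    unfold IsNested3 at h
    rw [hfun3] at h
    exact h
  exact nested_eq ⟨h3a.1, h3a.2⟩ h3b' huniq3

end NodalGraph
/-- last sentence of Proposition 3.1: if `T^s_{i,k|j,k}` is
nonempty for some `s ∈ {2,3}`, then the symmetric difference of the degree-1
nested sets appearing in `T_{i,k}` and `T_{j,k}` is empty. -/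
theorem T1_symmDiff_empty_of_higher_symmDiff_nonempty
    (G : NodalGraph) (hconn : G.Connected) (i j k : G.V)
    (hij : i ≠ j) (hmeet : ∃ e, G.onComp e i ∧ G.onComp e j)
    (M2i M2j M3i M3j : ℕ) (W2i W2j W3i W3j : ℕ → Finset G.V)
    (h2i : G.IsNested2 i k M2i W2i) (h2j : G.IsNested2 j k M2j W2j)
    (h3i : G.IsNested3 i k (G.chainSet M2i W2i) M3i W3i)
    (h3j : G.IsNested3 j k (G.chainSet M2j W2j) M3j W3j)
    (hne : (symmDiff (G.chainSet M2i W2i) (G.chainSet M2j W2j)).Nonempty ∨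
           (symmDiff (G.chainSet M3i W3i) (G.chainSet M3j W3j)).Nonempty) :
    symmDiff (G.T1 i ∪ G.T1 k) (G.T1 j ∪ G.T1 k) = ∅ := by
  classical
  obtain ⟨e₀, hei, hej⟩ := hmeet
  have he₀ : G.ends e₀ = (i, j) ∨ G.ends e₀ = (j, i) := by
    rcases hei with h1 | h1 <;> rcases hej with h2 | h2
    · exact absurd (h1.symm.trans h2) hij
    · exact Or.inl (Prod.ext h1 h2)
    · exact Or.inr (Prod.ext h2 h1)
    · exact absurd (h1.symm.trans h2) hij
  by_contra hSD
  obtain ⟨Z₀, hZ₀mem⟩ := Set.nonempty_iff_ne_empty.mpr hSD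
  rw [Set.mem_symmDiff] at hZ₀mem
  rcases hZ₀mem with ⟨hin, hout⟩ | ⟨hin, hout⟩
  · have hnk : Z₀ ∉ G.T1 k := fun h => hout (Or.inr h)
    have hni : Z₀ ∈ G.T1 i := by
      rcases hin with h | h
      · exact h
      · exact absurd h hnk
    have hnj : Z₀ ∉ G.T1 j := fun h => hout (Or.inl h)
    obtain ⟨htail, hiZ, hbase⟩ := hni
    have hjn : j ∉ Z₀ := fun hj => hnj ⟨htail, hj, hbase⟩
    have hkn : k ∉ Z₀ := fun hk => hnk ⟨htail, hk, hbase⟩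
    obtain ⟨ch2, ch3⟩ := NodalGraph.main_aux i j k e₀ he₀ Z₀ htail hiZ hjn hkn hbase
      h2i h2j h3i h3j
    rcases hne with ⟨x, hx⟩ | ⟨x, hx⟩
    · rw [ch2, symmDiff_self] at hx
      exact hx
    · rw [ch3, symmDiff_self] at hx
      exact hx
  · have hnk : Z₀ ∉ G.T1 k := fun h => hout (Or.inr h)
    have hnj : Z₀ ∈ G.T1 j := by
      rcases hin with h | h
      · exact h
      · exact absurd h hnk
    have hni : Z₀ ∉ G.T1 i := fun h => hout (Or.inl h)
    obtain ⟨htail, hjZ, hbase⟩ := hnj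
    have hin' : i ∉ Z₀ := fun hi => hni ⟨htail, hi, hbase⟩
    have hkn : k ∉ Z₀ := fun hk => hnk ⟨htail, hk, hbase⟩
    obtain ⟨ch2, ch3⟩ := NodalGraph.main_aux j i k e₀ he₀.symm Z₀ htail hjZ hin' hkn hbase
      h2j h2i h3j h3i
    rcases hne with ⟨x, hx⟩ | ⟨x, hx⟩
    · rw [ch2, symmDiff_self] at hx
      exact hx
    · rw [ch3, symmDiff_self] at hx
      exact hx
end

section
/- Let C be a nodal curve with marked smooth point σ(0), fixed node R ∈ C_γ ∩ C_{γ'} with γ ≠ γ'. For each t ∈ {1,2}, if R is not a separating node of C then T¹_γ = T¹_{γ'}; if R is a separating node and W is the 1-tail terminating at R and containing σ(0), then T¹_γ and T¹_{γ'} differ exactly by the single tail W. -/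
open Finset

namespace NodalGraph

/-- A node is separating (disconnecting) if the curve becomes disconnected
after removing it (i.e. after normalizing at it). -/
def SeparatingNode (G : NodalGraph) (e : G.N) : Prop :=
  ¬ ∀ u v : G.V, Relation.ReflTransGen
      (fun a b => ∃ f, f ≠ e ∧ (G.ends f = (a, b) ∨ G.ends f = (b, a))) u v

end NodalGraph


namespace NodalGraph

variable {G : NodalGraph}

lemma mem_term {e : G.N} {Z : Finset G.V} :
    e ∈ G.Term Z ↔ (((G.ends e).1 ∈ Z ∧ (G.ends e).2 ∉ Z) ∨
      ((G.ends e).1 ∉ Z ∧ (G.ends e).2 ∈ Z)) := by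
  simp [Term]

lemma term_compl (Z : Finset G.V) : G.Term Zᶜ = G.Term Z := by
  ext e
  simp only [mem_term, Finset.mem_compl, not_not]
  tauto

/-- The relation "connected by a node other than `R`". -/
def minusR (G : NodalGraph) (R : G.N) (a b : G.V) : Prop :=
  ∃ f, f ≠ R ∧ (G.ends f = (a, b) ∨ G.ends f = (b, a))

lemma closed_of_term {R : G.N} {Z : Finset G.V} (hT : G.Term Z = {R})
    {a b : G.V} (ha : a ∈ Z) (h : Relation.ReflTransGen (G.minusR R) a b) : b ∈ Z := by
  induction h with
  | refl => exact ha
  | @tail c d _ hstep ih =>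
    obtain ⟨f, hf, hends⟩ := hstep
    by_contra hd
    have hmem : f ∈ G.Term Z := by
      rw [mem_term]
      rcases hends with h1 | h1 <;> rw [h1] <;> simp only [] <;> tauto
    rw [hT, Finset.mem_singleton] at hmem
    exact hf hmem

lemma reachable_minusR {R : G.N} {Z : Finset G.V} (hT : G.Term Z = {R}) (hc : G.ConnSub Z)
    {u v : G.V} (hu : u ∈ Z) (hv : v ∈ Z) : Relation.ReflTransGen (G.minusR R) u v := by
  refine Relation.ReflTransGen.mono ?_ _ _ (hc.2 u hu v hv)
  rintro a b ⟨ha, hb, e, he⟩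
  refine ⟨e, ?_, he⟩
  intro heq
  subst heq
  have hR : e ∈ G.Term Z := hT ▸ Finset.mem_singleton_self e
  rw [mem_term] at hR
  rcases he with h | h <;> rw [h] at hR <;> simp only [] at hR <;> tauto

lemma eq_of_conn {R : G.N} {Z Z' : Finset G.V}
    (hT : G.Term Z = {R}) (hT' : G.Term Z' = {R})
    (hc : G.ConnSub Z) (hc' : G.ConnSub Z') {v : G.V}
    (hv : v ∈ Z) (hv' : v ∈ Z') : Z = Z' := by
  ext u
  constructor
  · intro hu
    exact closed_of_term hT' hv' (reachable_minusR hT hc hv hu)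
  · intro hu
    exact closed_of_term hT hv (reachable_minusR hT' hc' hv' hu)

lemma term_eq_singleton {R : G.N} {a b : G.V}
    (hab : G.ends R = (a, b) ∨ G.ends R = (b, a)) {Z : Finset G.V}
    (ha : a ∈ Z) (hb : b ∉ Z) (hk : G.k Z = 1) : G.Term Z = {R} := by
  have hR : R ∈ G.Term Z := by
    rw [mem_term]
    rcases hab with h | h <;> rw [h] <;> simp only [] <;> tauto
  have hk' : (G.Term Z).card = 1 := hk
  obtain ⟨x, hx⟩ := Finset.card_eq_one.mp hk'
  rw [hx] at hR ⊢
  rw [Finset.mem_singleton] at hR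
  rw [hR]

end NodalGraph

/-- from the proof of Lemma 6.1: for a node `R ∈ C_γ ∩ C_{γ'}`
with `γ ≠ γ'`: if `R` is not separating then `T¹_γ = T¹_{γ'}`; if `R` is
separating and `W` is the 1-tail terminating at `R` and containing `σ(0)`, then
`T¹_γ` and `T¹_{γ'}` differ exactly by the single tail `Wᶜ` (the tail `W` read
on the side not containing `σ(0)`). -/
theorem T1_comparison_at_node
    (G : NodalGraph) (hconn : G.Connected) (R : G.N) (γ γ' : G.V)
    (hγγ' : γ ≠ γ') (hR : G.onComp R γ ∧ G.onComp R γ') :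
    (¬ G.SeparatingNode R → G.T1 γ = G.T1 γ') ∧
    (G.SeparatingNode R → ∀ W : Finset G.V,
      G.IsKTail W 1 → G.Term W = {R} → G.base ∈ W →
      symmDiff (G.T1 γ) (G.T1 γ') = {Wᶜ}) := by
  obtain ⟨h1, h2⟩ := hR
  have hend : G.ends R = (γ, γ') ∨ G.ends R = (γ', γ) := by
    rcases h1 with h1 | h1 <;> rcases h2 with h2 | h2
    · exact absurd (h1.symm.trans h2) hγγ'
    · exact Or.inl (Prod.ext_iff.mpr ⟨h1, h2⟩)
    · exact Or.inr (Prod.ext_iff.mpr ⟨h2, h1⟩)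
    · exact absurd (h1.symm.trans h2) hγγ'
  constructor
  · -- non-separating case
    intro hns
    have hall : ∀ u v : G.V, Relation.ReflTransGen (G.minusR R) u v := not_not.mp hns
    have main : ∀ (a b : G.V), (G.ends R = (a, b) ∨ G.ends R = (b, a)) →
        ∀ Z, Z ∈ G.T1 a → Z ∈ G.T1 b := by
      intro a b hab Z hZ
      obtain ⟨hZ1, haZ, hbZ⟩ := hZ
      refine ⟨hZ1, ?_, hbZ⟩
      by_contra hb
      have hTZ : G.Term Z = {R} := NodalGraph.term_eq_singleton hab haZ hb hZ1.2
      exact hb (NodalGraph.closed_of_term hTZ haZ (hall a b))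
    ext Z
    exact ⟨main γ γ' hend Z, main γ' γ hend.symm Z⟩
  · -- separating case
    intro _ W hW hTW hbase
    obtain ⟨⟨hWne, hWc, hWcc⟩, hWk⟩ := hW
    have hRW : R ∈ G.Term W := hTW ▸ Finset.mem_singleton_self R
    rw [NodalGraph.mem_term] at hRW
    have hside : (γ ∈ W ∧ γ' ∉ W) ∨ (γ ∉ W ∧ γ' ∈ W) := by
      rcases hend with h | h <;> rw [h] at hRW <;> simp only [] at hRW <;> tauto
    have hTWc : G.Term Wᶜ = {R} := (NodalGraph.term_compl W).trans hTW
    have hWcne : Wᶜ ≠ Finset.univ := by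
      intro hcontr
      obtain ⟨w, hw⟩ := hWc.1
      have : w ∈ Wᶜ := hcontr ▸ Finset.mem_univ w
      rw [Finset.mem_compl] at this
      exact this hw
    have hWcTail : G.IsKTail Wᶜ 1 := by
      refine ⟨⟨hWcne, hWcc, ?_⟩, ?_⟩
      · rw [compl_compl]
        exact hWc
      · show (G.Term Wᶜ).card = 1
        rw [hTWc]
        simp
    have hbWc : G.base ∉ Wᶜ := by
      rw [Finset.mem_compl]
      exact fun h => h hbase
    ext Z
    rw [Set.mem_symmDiff, Set.mem_singleton_iff]
    constructor
    · rintro (⟨hZγ, hZγ'⟩ | ⟨hZγ', hZγ⟩)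
      · obtain ⟨hZ1, hγZ, hbZ⟩ := hZγ
        have hγ'Z : γ' ∉ Z := fun h => hZγ' ⟨hZ1, h, hbZ⟩
        have hTZ : G.Term Z = {R} := NodalGraph.term_eq_singleton hend hγZ hγ'Z hZ1.2
        have hγW : γ ∉ W := by
          intro hγW
          have : Z = W := NodalGraph.eq_of_conn hTZ hTW hZ1.1.2.1 hWc hγZ hγW
          exact hbZ (this ▸ hbase)
        exact NodalGraph.eq_of_conn hTZ hTWc hZ1.1.2.1 hWcc hγZ (Finset.mem_compl.mpr hγW)
      · obtain ⟨hZ1, hγ'Z, hbZ⟩ := hZγ'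
        have hγZ : γ ∉ Z := fun h => hZγ ⟨hZ1, h, hbZ⟩
        have hTZ : G.Term Z = {R} := NodalGraph.term_eq_singleton hend.symm hγ'Z hγZ hZ1.2
        have hγ'W : γ' ∉ W := by
          intro hγ'W
          have : Z = W := NodalGraph.eq_of_conn hTZ hTW hZ1.1.2.1 hWc hγ'Z hγ'W
          exact hbZ (this ▸ hbase)
        exact NodalGraph.eq_of_conn hTZ hTWc hZ1.1.2.1 hWcc hγ'Z (Finset.mem_compl.mpr hγ'W)
    · rintro rfl
      rcases hside with ⟨hγW, hγ'W⟩ | ⟨hγW, hγ'W⟩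
      · refine Or.inr ⟨⟨hWcTail, Finset.mem_compl.mpr hγ'W, hbWc⟩, ?_⟩
        intro hmem
        exact (Finset.mem_compl.mp hmem.2.1) hγW
      · refine Or.inl ⟨⟨hWcTail, Finset.mem_compl.mpr hγW, hbWc⟩, ?_⟩
        intro hmem
        exact (Finset.mem_compl.mp hmem.2.1) hγ'W
end
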